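/- Let s ≥ n ≥ 1 and let M be an s×n complex matrix of rank r with singular values σ₁ ≥ … ≥ σₙ ≥ 0. Let m be an integer with n−r ≤ m ≤ n and set ε = (3a_m + 1 − √((3a_m+1)² − 16a_m))/(4g_m). If a_m < 1/9, then M has ε-rank equal to n−m; that is, σ₁ ≥ … ≥ σ_{n−m} > ε ≥ σ_{n−m+1} ≥ … ≥ σₙ. -/

import Mathlib

open Finset

/-- The `k`-th elementary symmetric function of the values `σ i`, `i : Fin n`
(with the convention `esym σ 0 = 1`). -/
noncomputable def esym {n : ℕ} (σ : Fin n → ℝ) (k : ℕ) : ℝ :=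
  ∑ t ∈ Finset.univ.powersetCard k, ∏ i ∈ t, σ i

/-- `b_m = max_{0 ≤ i ≤ m-1} (s_{n-i}/s_{n-m})^{1/(m-i)}` (as an `sSup`,
which is `0` for `m = 0` by convention). -/
noncomputable def bQ (n : ℕ) (σ : Fin n → ℝ) (m : ℕ) : ℝ :=
  sSup ((fun i : ℕ => (esym σ (n - i) / esym σ (n - m)) ^ ((1 : ℝ) / ((m : ℝ) - (i : ℝ)))) ''
    (Set.Iio m))

/-- `g_m = max_{m+1 ≤ i ≤ n} (s_{n-i}/s_{n-m})^{1/(i-m)}`, with the convention `g_n = 1`. -/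
noncomputable def gQ (n : ℕ) (σ : Fin n → ℝ) (m : ℕ) : ℝ :=
  if m = n then 1 else
    sSup ((fun i : ℕ => (esym σ (n - i) / esym σ (n - m)) ^ ((1 : ℝ) / ((i : ℝ) - (m : ℝ)))) ''
      (Set.Icc (m + 1) n))

/-- `a_m = b_m · g_m`. -/
noncomputable def aQ (n : ℕ) (σ : Fin n → ℝ) (m : ℕ) : ℝ := bQ n σ m * gQ n σ m


open Complex Real ComplexOrder

lemma esym_nonneg {n : ℕ} {σ : Fin n → ℝ} (h : ∀ i, 0 ≤ σ i) (k : ℕ) : 0 ≤ esym σ k :=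
  Finset.sum_nonneg fun _t _ => Finset.prod_nonneg fun i _ => h i

lemma prod_identity {n : ℕ} (σ : Fin n → ℝ) (z : ℂ) :
    ∏ j, ((σ j : ℂ) + z) = ∑ i ∈ range (n+1), (esym σ (n-i) : ℂ) * z ^ i := by
  rw [Finset.prod_add]
  rw [Finset.sum_powerset, card_univ, Fintype.card_fin]
  rw [← Finset.sum_range_reflect]
  apply Finset.sum_congr rfl
  intro i hi
  rw [mem_range] at hi
  have h1 : n + 1 - 1 - i = n - i := by omega
  rw [h1]
  have h2 : ∀ t ∈ (univ : Finset (Fin n)).powersetCard (n - i),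
      (∏ j ∈ t, (σ j : ℂ)) * ∏ _j ∈ univ \ t, z = (∏ j ∈ t, (σ j : ℂ)) * z ^ i := by
    intro t ht
    rw [mem_powersetCard] at ht
    rw [Finset.prod_const, card_sdiff_of_subset ht.1, card_univ, Fintype.card_fin, ht.2]
    congr 2
    omega
  rw [Finset.sum_congr rfl h2, ← Finset.sum_mul]
  congr 1
  unfold esym
  push_cast
  rfl

lemma term_helper (ρ θ : ℝ) (i m : ℕ) :
    ((ρ:ℂ) * Complex.exp ((θ:ℂ) * I))^i * Complex.exp ((↑(-((m:ℝ)*θ)):ℂ) * I)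
      = ((ρ^i : ℝ):ℂ) * Complex.exp ((↑((i:ℝ)*θ - (m:ℝ)*θ):ℂ) * I) := by
  rw [mul_pow, ← Complex.exp_nat_mul]
  push_cast
  rw [mul_assoc, ← Complex.exp_add]
  ring_nf

lemma rotated_re_pos {n : ℕ} {σ : Fin n → ℝ} (hσ : ∀ i, 0 ≤ σ i) {m : ℕ} (hm : m ≤ n) {ρ : ℝ}
    (hρ : 0 < ρ)
    (hdom : ∑ i ∈ (range (n+1)).erase m, esym σ (n-i) * ρ^i < esym σ (n-m) * ρ^m) :
    ∀ θ : ℝ, 0 < ((∏ j, ((σ j:ℂ) + ↑ρ * Complex.exp ((θ:ℂ) * I))) *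
        Complex.exp ((↑(-((m:ℝ)*θ)):ℂ) * I)).re := by
  set c : ℕ → ℝ := fun i => esym σ (n-i) * ρ^i with hc
  intro θ
  rw [prod_identity, Finset.sum_mul]
  have hterm : ∀ i ∈ range (n+1),
      ((esym σ (n-i) : ℂ) * (↑ρ * Complex.exp ((θ:ℂ) * I)) ^ i *
        Complex.exp ((↑(-((m:ℝ)*θ)):ℂ) * I))
      = ((esym σ (n-i) * ρ^i : ℝ):ℂ) * Complex.exp ((↑((i:ℝ)*θ - (m:ℝ)*θ):ℂ) * I) := by
    intro i _
    rw [mul_assoc, term_helper]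
    push_cast
    ring
  rw [Finset.sum_congr rfl hterm, Complex.re_sum]
  have hre_term : ∀ i ∈ range (n+1),
      (((esym σ (n-i) * ρ^i : ℝ):ℂ) * Complex.exp ((↑((i:ℝ)*θ - (m:ℝ)*θ):ℂ) * I)).re
        = c i * Real.cos ((i:ℝ)*θ - (m:ℝ)*θ) := by
    intro i _
    rw [Complex.re_ofReal_mul, Complex.exp_ofReal_mul_I_re]
  rw [Finset.sum_congr rfl hre_term]
  have hmme : m ∈ range (n+1) := mem_range.mpr (by omega)
  rw [← Finset.add_sum_erase _ _ hmme]
  have h1 : c m * Real.cos ((m:ℝ)*θ - (m:ℝ)*θ) = c m := by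
    simp
  rw [h1]
  have h2 : ∀ i ∈ (range (n+1)).erase m,
      -(c i) ≤ c i * Real.cos ((i:ℝ)*θ - (m:ℝ)*θ) := by
    intro i _
    have hci : 0 ≤ c i := mul_nonneg (esym_nonneg hσ _) (by positivity)
    nlinarith [Real.neg_one_le_cos ((i:ℝ)*θ - (m:ℝ)*θ)]
  have h3 : ∑ i ∈ (range (n+1)).erase m, -(c i) ≤
      ∑ i ∈ (range (n+1)).erase m, c i * Real.cos ((i:ℝ)*θ - (m:ℝ)*θ) :=
    Finset.sum_le_sum h2
  rw [Finset.sum_neg_distrib] at h3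
  have := hdom
  simp only [hc] at *
  linarith

lemma no_root_on_circle {n : ℕ} {σ : Fin n → ℝ} (hσ : ∀ i, 0 ≤ σ i) {m : ℕ} (hm : m ≤ n) {ρ : ℝ}
    (hρ : 0 < ρ)
    (hdom : ∑ i ∈ (range (n+1)).erase m, esym σ (n-i) * ρ^i < esym σ (n-m) * ρ^m) :
    ∀ j, σ j ≠ ρ := by
  intro j hj
  have h0 := rotated_re_pos hσ hm hρ hdom π
  have hfac : ((σ j:ℂ) + ↑ρ * Complex.exp ((π:ℂ) * I)) = 0 := by
    rw [Complex.exp_pi_mul_I, hj]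
    ring
  rw [Finset.prod_eq_zero (Finset.mem_univ j) hfac] at h0
  simp at h0

noncomputable def wf {n : ℕ} (σ : Fin n → ℝ) (ρ : ℝ) (j : Fin n) (θ : ℝ) : ℂ :=
  if σ j < ρ then 1 + ((σ j / ρ : ℝ):ℂ) * Complex.exp (((-θ : ℝ):ℂ) * I)
  else ((σ j:ℂ) + ↑ρ * Complex.exp ((θ:ℂ) * I))

section D
variable {n : ℕ} {σ : Fin n → ℝ} {ρ : ℝ}

lemma wf_fact (hρ : 0 < ρ) (θ : ℝ) :
    ∏ j, ((σ j:ℂ) + ↑ρ * Complex.exp ((θ:ℂ) * I)) =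
      (↑ρ * Complex.exp ((θ:ℂ) * I))^(univ.filter (fun j : Fin n => σ j < ρ)).card
        * ∏ j, wf σ ρ j θ := by
  have hρC : (ρ:ℂ) ≠ 0 := by exact_mod_cast hρ.ne'
  have hee : Complex.exp ((θ:ℂ) * I) * Complex.exp (((-θ:ℝ):ℂ) * I) = 1 := by
    rw [← Complex.exp_add]
    push_cast
    ring_nf
    exact Complex.exp_zero
  rw [← Finset.prod_filter_mul_prod_filter_not univ (fun j : Fin n => σ j < ρ)
    (fun j => ((σ j:ℂ) + ↑ρ * Complex.exp ((θ:ℂ) * I)))]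
  rw [← Finset.prod_filter_mul_prod_filter_not univ (fun j : Fin n => σ j < ρ)
    (fun j => wf σ ρ j θ)]
  have h1 : ∀ j ∈ univ.filter (fun j : Fin n => σ j < ρ),
      ((σ j:ℂ) + ↑ρ * Complex.exp ((θ:ℂ) * I))
        = (↑ρ * Complex.exp ((θ:ℂ) * I)) * wf σ ρ j θ := by
    intro j hj
    rw [mem_filter] at hj
    simp only [wf, if_pos hj.2]
    have hd : (ρ:ℂ) * ((σ j / ρ : ℝ):ℂ) = (σ j:ℂ) := by
      push_cast
      field_simp
    calc (σ j:ℂ) + ↑ρ * Complex.exp ((θ:ℂ) * I)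
        = (↑ρ * ((σ j / ρ : ℝ):ℂ)) + ↑ρ * Complex.exp ((θ:ℂ) * I) := by rw [hd]
      _ = (↑ρ * Complex.exp ((θ:ℂ) * I)) *
            (1 + ((σ j / ρ : ℝ):ℂ) * Complex.exp (((-θ : ℝ):ℂ) * I))
          - (↑ρ * ((σ j / ρ : ℝ):ℂ)) *
            (Complex.exp ((θ:ℂ) * I) * Complex.exp (((-θ:ℝ):ℂ) * I) - 1) := by ring
      _ = (↑ρ * Complex.exp ((θ:ℂ) * I)) *
            (1 + ((σ j / ρ : ℝ):ℂ) * Complex.exp (((-θ : ℝ):ℂ) * I)) := by rw [hee]; ring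
  have h2 : ∀ j ∈ univ.filter (fun j : Fin n => ¬ σ j < ρ),
      wf σ ρ j θ = ((σ j:ℂ) + ↑ρ * Complex.exp ((θ:ℂ) * I)) := by
    intro j hj
    rw [mem_filter] at hj
    simp only [wf, if_neg hj.2]
  rw [Finset.prod_congr rfl h1, Finset.prod_congr rfl h2, Finset.prod_mul_distrib,
    Finset.prod_const]
  ring

lemma wf_re_pos (hσ : ∀ i, 0 ≤ σ i) (hρ : 0 < ρ) (hne : ∀ j, σ j ≠ ρ) (j : Fin n) (θ : ℝ) :
    0 < (wf σ ρ j θ).re := by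
  by_cases hj : σ j < ρ
  · simp only [wf, if_pos hj, Complex.add_re, Complex.one_re, Complex.re_ofReal_mul,
      Complex.exp_ofReal_mul_I_re]
    have h1 : 0 ≤ σ j / ρ := div_nonneg (hσ j) hρ.le
    have h2 : σ j / ρ < 1 := (div_lt_one hρ).mpr hj
    nlinarith [Real.neg_one_le_cos (-θ), Real.cos_le_one (-θ)]
  · have hbig : ρ < σ j := lt_of_le_of_ne (not_lt.mp hj) (hne j).symm
    simp only [wf, if_neg hj, Complex.add_re, Complex.ofReal_re, Complex.re_ofReal_mul,
      Complex.exp_ofReal_mul_I_re]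
    nlinarith [Real.neg_one_le_cos θ]

lemma wf_arg_cont (hσ : ∀ i, 0 ≤ σ i) (hρ : 0 < ρ) (hne : ∀ j, σ j ≠ ρ) (j : Fin n) :
    Continuous (fun θ => Complex.arg (wf σ ρ j θ)) := by
  have hw : Continuous (fun θ => wf σ ρ j θ) := by
    unfold wf
    by_cases hj : σ j < ρ
    · simp only [if_pos hj]
      fun_prop
    · simp only [if_neg hj]
      fun_prop
  rw [continuous_iff_continuousAt]
  intro θ
  exact (Complex.continuousAt_arg (Complex.mem_slitPlane_iff.mpr
    (Or.inl (wf_re_pos hσ hρ hne j θ)))).comp hw.continuousAt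

lemma wf_arg_zero (hσ : ∀ i, 0 ≤ σ i) (hρ : 0 < ρ) (j : Fin n) :
    Complex.arg (wf σ ρ j 0) = 0 := by
  by_cases hj : σ j < ρ
  · have h1 : wf σ ρ j 0 = (((1 + σ j / ρ : ℝ)):ℂ) := by
      simp only [wf, if_pos hj]
      norm_num
    rw [h1]
    exact Complex.arg_ofReal_of_nonneg
      (add_nonneg zero_le_one (div_nonneg (hσ j) hρ.le))
  · have h1 : wf σ ρ j 0 = (((σ j + ρ : ℝ)):ℂ) := by
      simp only [wf, if_neg hj]
      norm_num
    rw [h1]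
    exact Complex.arg_ofReal_of_nonneg (add_nonneg (hσ j) hρ.le)

lemma wf_arg_two_pi (hσ : ∀ i, 0 ≤ σ i) (hρ : 0 < ρ) (j : Fin n) :
    Complex.arg (wf σ ρ j (2*π)) = 0 := by
  have he2 : Complex.exp (((2*π : ℝ):ℂ) * I) = 1 := by
    push_cast
    exact Complex.exp_two_pi_mul_I
  have he2' : Complex.exp (((-(2*π) : ℝ):ℂ) * I) = 1 := by
    push_cast
    rw [show (-(2*(π:ℂ)) * I) = -(2*π*I) by ring, Complex.exp_neg, Complex.exp_two_pi_mul_I]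
    norm_num
  by_cases hj : σ j < ρ
  · have h1 : wf σ ρ j (2*π) = (((1 + σ j / ρ : ℝ)):ℂ) := by
      simp only [wf, if_pos hj, he2']
      push_cast; ring
    rw [h1]
    exact Complex.arg_ofReal_of_nonneg
      (add_nonneg zero_le_one (div_nonneg (hσ j) hρ.le))
  · have h1 : wf σ ρ j (2*π) = (((σ j + ρ : ℝ)):ℂ) := by
      simp only [wf, if_neg hj, he2]
      push_cast; ring
    rw [h1]
    exact Complex.arg_ofReal_of_nonneg (add_nonneg (hσ j) hρ.le)

lemma wf_prod_decomp (hσ : ∀ i, 0 ≤ σ i) (hρ : 0 < ρ) (hne : ∀ j, σ j ≠ ρ) (θ : ℝ) :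
    ∏ j, wf σ ρ j θ = (↑(∏ j, ‖wf σ ρ j θ‖) : ℂ)
      * Complex.exp ((↑(∑ j, Complex.arg (wf σ ρ j θ)) : ℂ) * I) := by
  have h1 : ∀ j ∈ (univ : Finset (Fin n)), wf σ ρ j θ
      = ((‖wf σ ρ j θ‖ : ℝ):ℂ) * Complex.exp (((Complex.arg (wf σ ρ j θ) : ℝ):ℂ) * I) := by
    intro j _
    exact (Complex.norm_mul_exp_arg_mul_I _).symm
  rw [Finset.prod_congr rfl h1, Finset.prod_mul_distrib, ← Complex.exp_sum]
  push_cast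
  rw [← Finset.sum_mul]

end D

lemma core {n : ℕ} {σ : Fin n → ℝ} (hσ : ∀ i, 0 ≤ σ i) {m : ℕ} (hm : m ≤ n) {ρ : ℝ}
    (hρ : 0 < ρ)
    (hdom : ∑ i ∈ (range (n+1)).erase m, esym σ (n-i) * ρ^i < esym σ (n-m) * ρ^m) :
    (univ.filter (fun j => σ j < ρ)).card = m ∧ ∀ j, σ j ≠ ρ := by
  have hre := rotated_re_pos hσ hm hρ hdom
  have hne := no_root_on_circle hσ hm hρ hdom
  refine ⟨?_, hne⟩
  set k := (univ.filter (fun j : Fin n => σ j < ρ)).card with hk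
  set A : ℝ → ℝ := fun θ => ∑ j, Complex.arg (wf σ ρ j θ) with hA
  set F : ℝ → ℝ := fun θ => (k:ℝ)*θ + A θ - (m:ℝ)*θ with hF
  have e1 : ∀ (i : ℕ) (θ : ℝ), ((ρ:ℂ) * Complex.exp ((θ:ℂ)*I))^i
      = ↑(ρ^i) * Complex.exp ((↑((i:ℕ)*θ) :ℂ) * I) := by
    intro i θ
    rw [mul_pow, ← Complex.exp_nat_mul]
    push_cast
    ring_nf
  have hcos : ∀ θ : ℝ, 0 < Real.cos (F θ) := by
    intro θ
    have h0 := hre θ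
    rw [wf_fact hρ θ, wf_prod_decomp hσ hρ hne θ, e1 k θ] at h0
    have e2 : (↑(ρ^k) * Complex.exp ((↑((k:ℕ)*θ) :ℂ) * I) *
        ((↑(∏ j, ‖wf σ ρ j θ‖) : ℂ)
          * Complex.exp ((↑(A θ) : ℂ) * I))) * Complex.exp ((↑(-((m:ℝ)*θ)):ℂ) * I)
        = ↑(ρ^k * ∏ j, ‖wf σ ρ j θ‖) * Complex.exp ((↑(F θ):ℂ) * I) := by
      have exp3 : ∀ (r p a b c : ℂ), r * Complex.exp a * (p * Complex.exp b) * Complex.exp c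
          = (r*p) * Complex.exp (a+b+c) := by
        intros r p a b c
        rw [Complex.exp_add, Complex.exp_add]
        ring
      rw [hF]
      push_cast
      rw [exp3]
      congr 1
      ring
    rw [e2, Complex.re_ofReal_mul, Complex.exp_ofReal_mul_I_re] at h0
    have hPnn : 0 ≤ ρ^k * ∏ j, ‖wf σ ρ j θ‖ :=
      mul_nonneg (pow_nonneg hρ.le k) (Finset.prod_nonneg fun j _ => norm_nonneg _)
    nlinarith
  have hA0 : A 0 = 0 := Finset.sum_eq_zero fun j _ => wf_arg_zero hσ hρ j
  have hA2 : A (2*π) = 0 := Finset.sum_eq_zero fun j _ => wf_arg_two_pi hσ hρ j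
  have hF0 : F 0 = 0 := by rw [hF]; simp [hA0]
  have hF2 : F (2*π) = ((k:ℝ) - m) * (2*π) := by rw [hF]; simp [hA2]; ring
  have hFcont : Continuous F := by
    apply Continuous.sub
    · exact ((continuous_const.mul continuous_id).add
        (continuous_finset_sum _ fun j _ => wf_arg_cont hσ hρ hne j))
    · exact continuous_const.mul continuous_id
  by_contra hkm
  have h2π : (0:ℝ) ≤ 2*π := by positivity
  rcases lt_or_gt_of_ne hkm with hlt | hgt
  · have hcast : (k:ℝ) + 1 ≤ m := by exact_mod_cast hlt
    have hF2le : F (2*π) ≤ -(2*π) := by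
      rw [hF2]
      nlinarith [Real.pi_pos]
    have hmem : (-(π/2)) ∈ Set.Icc (F (2*π)) (F 0) := by
      rw [hF0]
      constructor
      · linarith [Real.pi_pos]
      · linarith [Real.pi_pos]
    obtain ⟨θ, _, hθ⟩ := intermediate_value_Icc' h2π hFcont.continuousOn hmem
    have := hcos θ
    rw [hθ, Real.cos_neg, Real.cos_pi_div_two] at this
    linarith
  · have hcast : (m:ℝ) + 1 ≤ k := by exact_mod_cast hgt
    have hF2ge : 2*π ≤ F (2*π) := by
      rw [hF2]
      nlinarith [Real.pi_pos]
    have hmem : (π/2) ∈ Set.Icc (F 0) (F (2*π)) := by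
      rw [hF0]
      constructor
      · linarith [Real.pi_pos]
      · linarith [Real.pi_pos]
    obtain ⟨θ, _, hθ⟩ := intermediate_value_Icc h2π hFcont.continuousOn hmem
    have := hcos θ
    rw [hθ, Real.cos_pi_div_two] at this
    linarith


lemma geom_tail_le {x : ℝ} (h0 : 0 ≤ x) (h1 : x < 1) (N : ℕ) :
    ∑ j ∈ range N, x^(j+1) ≤ x/(1-x) := by
  have hx : x ≠ 1 := ne_of_lt h1
  have h1x : 0 < 1 - x := by linarith
  have hs : ∑ j ∈ range N, x^(j+1) = x * ((x^N - 1)/(x-1)) := by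
    rw [← geom_sum_eq hx N, Finset.mul_sum]
    apply Finset.sum_congr rfl
    intros
    ring
  have hne : x - 1 ≠ 0 := sub_ne_zero.mpr hx
  have hkey : x * ((x^N - 1)/(x-1)) = (x * (1 - x^N))/(1-x) := by
    field_simp
    ring
  rw [hs, hkey, div_le_div_iff₀ h1x h1x]
  have hxN : 0 ≤ x^N := pow_nonneg h0 N
  nlinarith [mul_nonneg (mul_nonneg h0 h1x.le) hxN]

lemma esym_pos {n : ℕ} {σ : Fin n → ℝ} (hσ : ∀ i, 0 ≤ σ i) {k : ℕ} (hk : k ≤ n)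
    (hpos : ∀ i : Fin n, (i:ℕ) < k → 0 < σ i) : 0 < esym σ k := by
  classical
  set t : Finset (Fin n) := (univ : Finset (Fin k)).map (Fin.castLEEmb hk) with ht
  have htmem : t ∈ (univ : Finset (Fin n)).powersetCard k :=
    mem_powersetCard.mpr ⟨subset_univ _, by simp [ht]⟩
  have hprod : 0 < ∏ i ∈ t, σ i := by
    apply Finset.prod_pos
    intro i hi
    rw [ht, mem_map] at hi
    obtain ⟨j, _, rfl⟩ := hi
    exact hpos _ (by simpa using j.isLt)
  have hle : ∏ i ∈ t, σ i ≤ esym σ k :=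
    Finset.single_le_sum (f := fun s => ∏ i ∈ s, σ i)
      (fun s _ => Finset.prod_nonneg fun i _ => hσ i) htmem
  linarith

lemma rpow_inv_le {y bb : ℝ} {j : ℕ} (hy : 0 ≤ y) (hj : 0 < j)
    (h : y ^ ((1:ℝ)/(j:ℝ)) ≤ bb) : y ≤ bb ^ j := by
  have hjR : ((j:ℝ)) ≠ 0 := by positivity
  have h2 := Real.rpow_le_rpow (Real.rpow_nonneg hy _) h (Nat.cast_nonneg j)
  rw [← Real.rpow_mul hy, one_div_mul_cancel hjR, Real.rpow_one, Real.rpow_natCast] at h2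
  exact h2

lemma count_to_bounds {n : ℕ} {σ : Fin n → ℝ}
    (hanti : ∀ i j : Fin n, i ≤ j → σ j ≤ σ i) {ρ : ℝ} {m : ℕ} (hm : m ≤ n)
    (hcount : (univ.filter (fun j : Fin n => σ j < ρ)).card = m) :
    (∀ i : Fin n, n - m ≤ (i:ℕ) → σ i < ρ) ∧ (∀ i : Fin n, (i:ℕ) < n - m → ρ ≤ σ i) := by
  constructor
  · intro i hi
    by_contra hcon
    push_neg at hcon
    have hsub : univ.filter (fun j : Fin n => σ j < ρ) ⊆ Finset.Ioi i := by
      intro j hj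
      rw [mem_filter] at hj
      rw [Finset.mem_Ioi]
      by_contra hji
      push_neg at hji
      exact absurd (lt_of_lt_of_le hj.2 (le_trans hcon (hanti j i hji)))
        (lt_irrefl _)
    have hcard := Finset.card_le_card hsub
    rw [hcount, Fin.card_Ioi] at hcard
    have := i.isLt
    omega
  · intro i hi
    by_contra hcon
    push_neg at hcon
    have hsub : Finset.Ici i ⊆ univ.filter (fun j : Fin n => σ j < ρ) := by
      intro j hj
      rw [Finset.mem_Ici] at hj
      rw [mem_filter]
      exact ⟨mem_univ _, lt_of_le_of_lt (hanti i j hj) hcon⟩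
    have hcard := Finset.card_le_card hsub
    rw [hcount, Fin.card_Ici] at hcard
    have := i.isLt
    omega

lemma dom_of_BU {n m : ℕ} {σ : Fin n → ℝ} (hσ : ∀ i, 0 ≤ σ i) (hm : m ≤ n) {bb gg ρ : ℝ}
    (heT : 0 < esym σ (n-m)) (hρ : 0 < ρ)
    (hF1 : ∀ i, i < m → esym σ (n-i) ≤ bb^(m-i) * esym σ (n-m))
    (hF2 : ∀ i, m < i → i ≤ n → esym σ (n-i) ≤ gg^(i-m) * esym σ (n-m))
    (hb0 : 0 ≤ bb) (hg0 : 0 ≤ gg)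
    (hB : bb/ρ < 1) (hU : gg*ρ < 1)
    (hBU : (bb/ρ)/(1-bb/ρ) + (gg*ρ)/(1-gg*ρ) < 1) :
    ∑ i ∈ (range (n+1)).erase m, esym σ (n-i) * ρ^i < esym σ (n-m) * ρ^m := by
  have hB0 : 0 ≤ bb/ρ := div_nonneg hb0 hρ.le
  have hU0 : 0 ≤ gg*ρ := mul_nonneg hg0 hρ.le
  have heTρ : 0 < esym σ (n-m) * ρ^m := mul_pos heT (pow_pos hρ m)
  have hsplit : (range (n+1)).erase m = range m ∪ Ico (m+1) (n+1) := by
    ext x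
    simp only [mem_erase, mem_range, mem_union, mem_Ico]
    omega
  have hdisj : Disjoint (range m) (Ico (m+1) (n+1)) := by
    rw [Finset.disjoint_left]
    intro x hx hx'
    rw [mem_range] at hx
    rw [mem_Ico] at hx'
    omega
  rw [hsplit, Finset.sum_union hdisj]
  -- part 1
  have hpart1 : ∑ i ∈ range m, esym σ (n-i) * ρ^i
      ≤ (esym σ (n-m) * ρ^m) * ((bb/ρ)/(1-bb/ρ)) := by
    have hterm : ∀ i ∈ range m, esym σ (n-i) * ρ^i
        ≤ (esym σ (n-m) * ρ^m) * (bb/ρ)^(m-i) := by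
      intro i hi
      rw [mem_range] at hi
      have h1 := hF1 i hi
      have hpow : (bb/ρ)^(m-i) * ρ^m = bb^(m-i) * ρ^i := by
        have hρm : ρ^m = ρ^(m-i) * ρ^i := by
          rw [← pow_add]
          congr 1
          omega
        rw [div_pow, hρm]
        field_simp
      calc esym σ (n-i) * ρ^i ≤ (bb^(m-i) * esym σ (n-m)) * ρ^i :=
            mul_le_mul_of_nonneg_right h1 (by positivity)
        _ = (esym σ (n-m) * ρ^m) * (bb/ρ)^(m-i) := by
            rw [show (esym σ (n-m) * ρ^m) * (bb/ρ)^(m-i)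
              = esym σ (n-m) * ((bb/ρ)^(m-i) * ρ^m) from by ring, hpow]
            ring
    calc ∑ i ∈ range m, esym σ (n-i) * ρ^i
        ≤ ∑ i ∈ range m, (esym σ (n-m) * ρ^m) * (bb/ρ)^(m-i) := Finset.sum_le_sum hterm
      _ = (esym σ (n-m) * ρ^m) * ∑ i ∈ range m, (bb/ρ)^(m-i) := by rw [Finset.mul_sum]
      _ ≤ (esym σ (n-m) * ρ^m) * ((bb/ρ)/(1-bb/ρ)) := by
          apply mul_le_mul_of_nonneg_left _ heTρ.le
          rw [← Finset.sum_range_reflect]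
          have : ∀ i ∈ range m, (bb/ρ)^(m - (m-1-i)) = (bb/ρ)^(i+1) := by
            intro i hi
            rw [mem_range] at hi
            congr 1
            omega
          rw [Finset.sum_congr rfl this]
          exact geom_tail_le hB0 hB m
  -- part 2
  have hpart2 : ∑ i ∈ Ico (m+1) (n+1), esym σ (n-i) * ρ^i
      ≤ (esym σ (n-m) * ρ^m) * ((gg*ρ)/(1-gg*ρ)) := by
    have hterm : ∀ i ∈ Ico (m+1) (n+1), esym σ (n-i) * ρ^i
        ≤ (esym σ (n-m) * ρ^m) * (gg*ρ)^(i-m) := by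
      intro i hi
      rw [mem_Ico] at hi
      have h1 := hF2 i (by omega) (by omega)
      have hpow : (gg*ρ)^(i-m) * ρ^m = gg^(i-m) * ρ^i := by
        have hρi : ρ^i = ρ^(i-m) * ρ^m := by
          rw [← pow_add]
          congr 1
          omega
        rw [mul_pow, hρi]
        ring
      calc esym σ (n-i) * ρ^i ≤ (gg^(i-m) * esym σ (n-m)) * ρ^i :=
            mul_le_mul_of_nonneg_right h1 (by positivity)
        _ = (esym σ (n-m) * ρ^m) * (gg*ρ)^(i-m) := by
            rw [show (esym σ (n-m) * ρ^m) * (gg*ρ)^(i-m)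
              = esym σ (n-m) * ((gg*ρ)^(i-m) * ρ^m) from by ring, hpow]
            ring
    calc ∑ i ∈ Ico (m+1) (n+1), esym σ (n-i) * ρ^i
        ≤ ∑ i ∈ Ico (m+1) (n+1), (esym σ (n-m) * ρ^m) * (gg*ρ)^(i-m) :=
          Finset.sum_le_sum hterm
      _ = (esym σ (n-m) * ρ^m) * ∑ i ∈ Ico (m+1) (n+1), (gg*ρ)^(i-m) := by
          rw [Finset.mul_sum]
      _ ≤ (esym σ (n-m) * ρ^m) * ((gg*ρ)/(1-gg*ρ)) := by
          apply mul_le_mul_of_nonneg_left _ heTρ.le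
          rw [Finset.sum_Ico_eq_sum_range]
          have : ∀ j ∈ range (n+1-(m+1)), (gg*ρ)^(m+1+j-m) = (gg*ρ)^(j+1) := by
            intro j hj
            congr 1
            omega
          rw [Finset.sum_congr rfl this]
          exact geom_tail_le hU0 hU (n+1-(m+1))
  calc ∑ i ∈ range m, esym σ (n-i) * ρ^i + ∑ i ∈ Ico (m+1) (n+1), esym σ (n-i) * ρ^i
      ≤ (esym σ (n-m) * ρ^m) * ((bb/ρ)/(1-bb/ρ)) + (esym σ (n-m) * ρ^m) * ((gg*ρ)/(1-gg*ρ)) :=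
        add_le_add hpart1 hpart2
    _ = (esym σ (n-m) * ρ^m) * ((bb/ρ)/(1-bb/ρ) + (gg*ρ)/(1-gg*ρ)) := by ring
    _ < (esym σ (n-m) * ρ^m) * 1 := by
        exact mul_lt_mul_of_pos_left hBU heTρ
    _ = esym σ (n-m) * ρ^m := mul_one _


set_option maxHeartbeats 1000000 in
/-- Let `s ≥ n ≥ 1` and let `M` be an `s × n` complex matrix of rank `r`
with singular values `σ₁ ≥ … ≥ σₙ ≥ 0`.  Let `n - r ≤ m ≤ n` and set
`ε = (3 a_m + 1 - √((3 a_m + 1)² - 16 a_m)) / (4 g_m)`.  If `a_m < 1/9` then `M` has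
`ε`-rank equal to `n - m`, i.e. `σ_i > ε` for `i ≤ n - m` and `σ_i ≤ ε` for `i > n - m`. -/
theorem stmt0 {s n : ℕ} (hn : 1 ≤ n) (hsn : n ≤ s)
    (M : Matrix (Fin s) (Fin n) ℂ) (σ : Fin n → ℝ)
    (hσnonneg : ∀ i, 0 ≤ σ i)
    (hσanti : ∀ i j : Fin n, i ≤ j → σ j ≤ σ i)
    -- `σ` is the family of singular values of `M`, i.e. (up to reordering) the square
    -- roots of the eigenvalues of `Mᴴ * M`:
    (e : Fin n ≃ Fin n)
    (hσsv : ∀ i, σ i =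
      Real.sqrt ((Matrix.isHermitian_conjTranspose_mul_self M).eigenvalues (e i)))
    (r : ℕ) (hrank : M.rank = r)
    (m : ℕ) (hm₁ : n - r ≤ m) (hm₂ : m ≤ n)
    (ha : aQ n σ m < 1 / 9)
    (ε : ℝ)
    (hε : ε = (3 * aQ n σ m + 1 -
      Real.sqrt ((3 * aQ n σ m + 1) ^ 2 - 16 * aQ n σ m)) / (4 * gQ n σ m)) :
    (∀ i : Fin n, (i : ℕ) < n - m → ε < σ i) ∧
    (∀ i : Fin n, n - m ≤ (i : ℕ) → σ i ≤ ε) := by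
  classical
  -- eigenvalue facts
  have heig0 : ∀ i, 0 ≤ (Matrix.isHermitian_conjTranspose_mul_self M).eigenvalues i :=
    Matrix.eigenvalues_conjTranspose_mul_self_nonneg M
  have hcard : (univ.filter fun i : Fin n => σ i ≠ 0).card = r := by
    have h1 : (univ.filter fun i : Fin n => σ i ≠ 0)
        = univ.filter (fun i : Fin n =>
          (Matrix.isHermitian_conjTranspose_mul_self M).eigenvalues (e i) ≠ 0) := by
      apply Finset.filter_congr
      intro i _
      rw [hσsv i]
      simp only [ne_eq]
      rw [Real.sqrt_eq_zero (heig0 _)]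
    have h2 : (univ.filter (fun i : Fin n =>
        (Matrix.isHermitian_conjTranspose_mul_self M).eigenvalues (e i) ≠ 0)).card
        = (univ.filter (fun j : Fin n =>
          (Matrix.isHermitian_conjTranspose_mul_self M).eigenvalues j ≠ 0)).card := by
      apply Finset.card_bij (fun i _ => e i)
      · intro i hi
        rw [mem_filter] at hi ⊢
        exact ⟨mem_univ _, hi.2⟩
      · intro i _ j _ hij
        exact e.injective hij
      · intro j hj
        refine ⟨e.symm j, ?_, by simp⟩
        rw [mem_filter] at hj ⊢
        refine ⟨mem_univ _, by simpa using hj.2⟩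
    rw [h1, h2, ← Fintype.card_subtype,
      ← Matrix.IsHermitian.rank_eq_card_non_zero_eigs,
      Matrix.rank_conjTranspose_mul_self, hrank]
  have hσpos : ∀ i : Fin n, (i:ℕ) < r → 0 < σ i := by
    intro i hir
    by_contra hcon
    push_neg at hcon
    have hzero : σ i = 0 := le_antisymm hcon (hσnonneg i)
    have hle : r ≤ (i:ℕ) := by
      rw [← hcard]
      have := Finset.card_le_card_of_injOn (fun j : Fin n => (j:ℕ))
        (s := univ.filter fun j : Fin n => σ j ≠ 0) (t := range (i:ℕ))
        ?maps ?inj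
      · simpa using this
      case maps =>
        intro j hj
        rw [Finset.mem_coe, mem_filter] at hj
        rw [Finset.mem_coe, mem_range]
        by_contra hji
        push_neg at hji
        have : σ j = 0 := le_antisymm
          (le_trans (hσanti i j (by exact hji)) (le_of_eq hzero)) (hσnonneg j)
        exact hj.2 this
      case inj =>
        intro x _ y _ hxy
        exact Fin.val_injective hxy
    omega
  have hposlt : ∀ i : Fin n, (i:ℕ) < n - m → 0 < σ i := fun i h => hσpos i (by omega)
  have heT : 0 < esym σ (n-m) := esym_pos hσnonneg (by omega) hposlt
  -- bQ facts
  have hbdd : BddAbove ((fun i : ℕ =>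
      (esym σ (n - i) / esym σ (n - m)) ^ ((1 : ℝ) / ((m : ℝ) - (i : ℝ)))) '' (Set.Iio m)) :=
    ((Set.finite_Iio m).image _).bddAbove
  have hb0 : 0 ≤ bQ n σ m := by
    rcases Nat.eq_zero_or_pos m with h0 | hpos
    · have : Set.Iio m = (∅ : Set ℕ) := by
        subst h0
        ext x
        simp
      rw [bQ, this]
      simp [Real.sSup_empty]
    · refine le_trans ?_ (le_csSup hbdd (Set.mem_image_of_mem _ (show 0 ∈ Set.Iio m from hpos)))
      exact Real.rpow_nonneg
        (div_nonneg (esym_nonneg hσnonneg _) (esym_nonneg hσnonneg _)) _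
  have hF1 : ∀ i, i < m → esym σ (n-i) ≤ bQ n σ m ^ (m-i) * esym σ (n-m) := by
    intro i hi
    have hle := le_csSup hbdd (Set.mem_image_of_mem _ (show i ∈ Set.Iio m from hi))
    rw [show ((m:ℝ) - (i:ℝ)) = ((m - i : ℕ):ℝ) from by
      rw [Nat.cast_sub hi.le]] at hle
    have h2 := rpow_inv_le
      (div_nonneg (esym_nonneg hσnonneg _) (esym_nonneg hσnonneg _))
      (show 0 < m - i by omega) hle
    rwa [div_le_iff₀ heT] at h2
  -- gQ facts
  have hgbdd : BddAbove ((fun i : ℕ =>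
      (esym σ (n - i) / esym σ (n - m)) ^ ((1 : ℝ) / ((i : ℝ) - (m : ℝ)))) ''
      (Set.Icc (m + 1) n)) :=
    ((Set.finite_Icc _ _).image _).bddAbove
  have hg0 : 0 < gQ n σ m := by
    by_cases hmn : m = n
    · rw [gQ, if_pos hmn]
      norm_num
    · rw [gQ, if_neg hmn]
      have hmn' : m < n := lt_of_le_of_ne hm₂ hmn
      refine lt_of_lt_of_le ?_ (le_csSup hgbdd (Set.mem_image_of_mem _
        (show m+1 ∈ Set.Icc (m+1) n from by simp [Set.mem_Icc]; omega)))
      apply Real.rpow_pos_of_pos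
      apply div_pos (esym_pos hσnonneg (by omega)
        (fun i h => hposlt i (by omega))) heT
  have hF2 : ∀ i, m < i → i ≤ n → esym σ (n-i) ≤ gQ n σ m ^ (i-m) * esym σ (n-m) := by
    intro i h1 h2
    have hmn : ¬ (m = n) := by omega
    rw [gQ, if_neg hmn]
    have hle := le_csSup hgbdd (Set.mem_image_of_mem _
      (show i ∈ Set.Icc (m+1) n from by simp [Set.mem_Icc]; omega))
    rw [show ((i:ℝ) - (m:ℝ)) = ((i - m : ℕ):ℝ) from by
      rw [Nat.cast_sub (by omega)]] at hle
    have h3 := rpow_inv_le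
      (div_nonneg (esym_nonneg hσnonneg _) (esym_nonneg hσnonneg _))
      (show 0 < i - m by omega) hle
    rwa [div_le_iff₀ heT] at h3
  -- algebra
  have ha0 : 0 ≤ aQ n σ m := mul_nonneg hb0 hg0.le
  have hargnn : 0 ≤ (3*aQ n σ m+1)^2 - 16*aQ n σ m := by nlinarith
  have hD2 : (Real.sqrt ((3*aQ n σ m+1)^2 - 16*aQ n σ m))^2
      = (3*aQ n σ m+1)^2 - 16*aQ n σ m := Real.sq_sqrt hargnn
  set a := aQ n σ m with haQ
  set D := Real.sqrt ((3*a+1)^2 - 16*a) with hDdef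
  have hD0 : 0 ≤ D := Real.sqrt_nonneg _
  have hDpos : 0 < D := by
    rcases hD0.lt_or_eq with h | h
    · exact h
    · exfalso
      nlinarith [h.symm, hD2]
  set u₁ := (3*a+1-D)/4 with hu₁def
  set u₂ := (3*a+1+D)/4 with hu₂def
  have hDle : D ≤ 1 - a := by nlinarith [hD2, hD0]
  have hau₁ : a ≤ u₁ := by
    rw [hu₁def]
    linarith
  have hu₁0 : 0 ≤ u₁ := le_trans ha0 hau₁
  have hu12 : u₁ < u₂ := by
    rw [hu₁def, hu₂def]
    linarith
  have hu₂lt1 : u₂ < 1 := by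
    rw [hu₂def]
    nlinarith
  have hεu : ε = u₁ / gQ n σ m := by
    rw [hε, hu₁def]
    field_simp
  -- the key step
  have key : ∀ u : ℝ, u₁ < u → u < u₂ →
      (∀ i : Fin n, n - m ≤ (i:ℕ) → σ i < u / gQ n σ m) ∧
      (∀ i : Fin n, (i:ℕ) < n - m → u / gQ n σ m ≤ σ i) := by
    intro u hu1 hu2
    have hu0 : 0 < u := lt_of_le_of_lt hu₁0 hu1
    have hρ : 0 < u / gQ n σ m := div_pos hu0 hg0
    have hau : a < u := lt_of_le_of_lt hau₁ hu1
    have hult1 : u < 1 := lt_trans hu2 hu₂lt1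
    have hBeq : bQ n σ m / (u / gQ n σ m) = a / u := by
      have haa : a = bQ n σ m * gQ n σ m := rfl
      rw [haa]
      field_simp
    have hUeq : gQ n σ m * (u / gQ n σ m) = u := by
      field_simp
    have hB1 : bQ n σ m / (u / gQ n σ m) < 1 := by
      rw [hBeq]
      exact (div_lt_one hu0).mpr hau
    have hU1 : gQ n σ m * (u / gQ n σ m) < 1 := by
      rw [hUeq]
      exact hult1
    have hQneg : 2*u^2 - (3*a+1)*u + 2*a < 0 := by
      have hprod : 0 < (u - u₁) * (u₂ - u) :=
        mul_pos (sub_pos.mpr hu1) (sub_pos.mpr hu2)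
      rw [hu₁def, hu₂def] at hprod
      nlinarith [hD2]
    have hBU : (bQ n σ m / (u / gQ n σ m))/(1 - bQ n σ m / (u / gQ n σ m))
        + (gQ n σ m * (u / gQ n σ m))/(1 - gQ n σ m * (u / gQ n σ m)) < 1 := by
      rw [hBeq, hUeq]
      have h2 : 0 < 1 - u := by linarith
      have hBa : a / u < 1 := (div_lt_one hu0).mpr hau
      have h1 : 0 < 1 - a/u := by linarith
      rw [div_add_div _ _ (ne_of_gt h1) (ne_of_gt h2), div_lt_one (mul_pos h1 h2)]
      have hBu : (a/u) * u = a := div_mul_cancel₀ a (ne_of_gt hu0)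
      nlinarith [hQneg, hBu, hu0]
    have hdom := dom_of_BU hσnonneg hm₂ heT hρ hF1 hF2 hb0 hg0.le hB1 hU1 hBU
    obtain ⟨hcount, _⟩ := core hσnonneg hm₂ hρ hdom
    exact count_to_bounds hσanti hm₂ hcount
  constructor
  · intro i hi
    have h := (key ((u₁+u₂)/2) (by linarith) (by linarith)).2 i hi
    have hlt : ε < ((u₁+u₂)/2) / gQ n σ m := by
      rw [hεu]
      exact (div_lt_div_iff_of_pos_right hg0).mpr (by linarith)
    linarith
  · intro i hi
    by_contra hcon
    push_neg at hcon
    have hgσ : u₁ < gQ n σ m * σ i := by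
      have h1 : u₁ / gQ n σ m < σ i := by
        rw [← hεu]
        exact hcon
      calc u₁ = gQ n σ m * (u₁ / gQ n σ m) := by field_simp
        _ < gQ n σ m * σ i := by
            exact mul_lt_mul_of_pos_left h1 hg0
    set u := min ((u₁+u₂)/2) ((u₁ + gQ n σ m * σ i)/2) with hudef
    have h1 : u₁ < u := lt_min (by linarith) (by linarith)
    have h2 : u < u₂ := lt_of_le_of_lt (min_le_left _ _) (by linarith)
    have h3 := (key u h1 h2).1 i hi
    have h4 : u / gQ n σ m < σ i := by
      rw [div_lt_iff₀ hg0]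
      calc u ≤ (u₁ + gQ n σ m * σ i)/2 := min_le_right _ _
        _ < gQ n σ m * σ i := by linarith
        _ = σ i * gQ n σ m := by ring
    linarith
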